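/- arXiv:2209.13034 — 2 statements merged into one kernel-verified Lean document; each statement's English description precedes it below -/
import Mathlib

section
/- Let G=(V,E) be a hypergraph, let z be a point of the multilinear set S_G, let e_0 ∈ E, and let T be a nonempty finite index set of distinct edges e_k ∈ E \ {e_0} (k ∈ T), each adjacent to e_0 (i.e., e_k ∩ e_0 ≠ ∅), satisfying γ_i := |(e_0 ∩ e_i) \ ∪_{j∈T\{i}} (e_0 ∩ e_j)| ≥ 2 for all i ∈ T. Then z satisfies the extended flower inequality centered at e_0 with neighbors e_k, k ∈ T: ∑_{v ∈ e_0 \ ∪_{k∈T} e_k} z_v + ∑_{k∈T} z_{e_k} − z_{e_0} ≤ |e_0 \ ∪_{k∈T} e_k| + |T| − 1. -/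
open Finset

/-- A hypergraph: a finite set of nodes together with a set of edges,
each a subset of the nodes of cardinality at least two. -/
structure MLHypergraph (α : Type*) [DecidableEq α] where
  V : Finset α
  E : Finset (Finset α)
  edge_sub : ∀ e ∈ E, e ⊆ V
  edge_card : ∀ e ∈ E, 2 ≤ e.card

section Defs

variable {α : Type*} [DecidableEq α]

/-- Membership in the multilinear set `S_G`; a point is encoded as a single function
`z : Finset α → ℝ`, with node variables `z {v}` and edge variables `z e`. -/
def MultilinearSet (G : MLHypergraph α) (z : Finset α → ℝ) : Prop :=
  (∀ v ∈ G.V, z {v} = 0 ∨ z {v} = 1) ∧ ∀ e ∈ G.E, z e = ∏ v ∈ e, z {v}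

/-- Membership in the standard linearization `MP^LP_G`. -/
def StdLin (G : MLHypergraph α) (z : Finset α → ℝ) : Prop :=
  (∀ v ∈ G.V, z {v} ≤ 1) ∧
    ∀ e ∈ G.E, 0 ≤ z e ∧ (∑ v ∈ e, z {v}) - (e.card : ℝ) + 1 ≤ z e ∧ ∀ v ∈ e, z e ≤ z {v}

/-- The (extended) flower inequality centered at `e₀` with set of neighbors `T`. -/
def ExtFlowerIneq (z : Finset α → ℝ) (e₀ : Finset α) (T : Finset (Finset α)) : Prop :=
  (∑ v ∈ e₀ \ T.biUnion id, z {v}) + (∑ e ∈ T, z e) - z e₀ ≤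
    ((e₀ \ T.biUnion id).card : ℝ) + (T.card : ℝ) - 1

/-- `T` is a valid set of neighbors for an extended flower inequality centered at `e₀`:
a nonempty set of edges, distinct from `e₀`, adjacent to `e₀`, with `γ_i ≥ 2` for all `i ∈ T`. -/
def ValidEFNeighbors (G : MLHypergraph α) (e₀ : Finset α) (T : Finset (Finset α)) : Prop :=
  T.Nonempty ∧ (∀ e ∈ T, e ∈ G.E ∧ e ≠ e₀ ∧ (e ∩ e₀).Nonempty) ∧
    ∀ i ∈ T, 2 ≤ ((e₀ ∩ i) \ (T.erase i).biUnion (fun j => e₀ ∩ j)).card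

/-- Membership in the extended flower relaxation `MP^EF_G`. -/
def MPEF (G : MLHypergraph α) (z : Finset α → ℝ) : Prop :=
  StdLin G z ∧ ∀ e₀ ∈ G.E, ∀ T : Finset (Finset α), ValidEFNeighbors G e₀ T → ExtFlowerIneq z e₀ T

/-- `T` is a valid set of neighbors for a flower inequality centered at `e₀`. -/
def ValidFlowerNeighbors (G : MLHypergraph α) (e₀ : Finset α) (T : Finset (Finset α)) : Prop :=
  T.Nonempty ∧ (∀ e ∈ T, e ∈ G.E ∧ e ≠ e₀ ∧ 2 ≤ (e₀ ∩ e).card) ∧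
    ∀ i ∈ T, ∀ j ∈ T, i ≠ j → e₀ ∩ i ∩ j = ∅

/-- Membership in the flower relaxation `MP^F_G`. -/
def MPF (G : MLHypergraph α) (z : Finset α → ℝ) : Prop :=
  StdLin G z ∧ ∀ e₀ ∈ G.E, ∀ T : Finset (Finset α), ValidFlowerNeighbors G e₀ T → ExtFlowerIneq z e₀ T

/-- A recursive McCormick relaxation (RMC) of the multilinear set `S_G`:
a set `Ebar` of artificial edges together with, for each `f ∈ E ∪ Ebar`,
a partition `f = J f ∪ K f` into two disjoint nonempty parts, each a singleton
or an element of `E ∪ Ebar`, such that every artificial edge is reachable from some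
edge of `E` by iteratively passing to non-singleton parts. -/
structure RMC {α : Type*} [DecidableEq α] (G : MLHypergraph α) where
  Ebar : Finset (Finset α)
  ebar_sub : ∀ f ∈ Ebar, f ⊆ G.V
  ebar_card : ∀ f ∈ Ebar, 2 ≤ f.card
  ebar_new : ∀ f ∈ Ebar, f ∉ G.E
  J : Finset α → Finset α
  K : Finset α → Finset α
  union_eq : ∀ f ∈ G.E ∪ Ebar, J f ∪ K f = f
  disj : ∀ f ∈ G.E ∪ Ebar, Disjoint (J f) (K f)
  J_ne : ∀ f ∈ G.E ∪ Ebar, (J f).Nonempty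
  K_ne : ∀ f ∈ G.E ∪ Ebar, (K f).Nonempty
  J_mem : ∀ f ∈ G.E ∪ Ebar, (J f).card = 1 ∨ J f ∈ G.E ∪ Ebar
  K_mem : ∀ f ∈ G.E ∪ Ebar, (K f).card = 1 ∨ K f ∈ G.E ∪ Ebar
  reach : ∀ f ∈ Ebar, ∃ e ∈ G.E, Relation.ReflTransGen
    (fun a b => a ∈ G.E ∪ Ebar ∧ 2 ≤ b.card ∧ (b = J a ∨ b = K a)) e f

/-- One step of the recursive decomposition: passing from `a` to a non-singleton part of it. -/
def RMC.step {α : Type*} [DecidableEq α] {G : MLHypergraph α} (M : RMC G) (a b : Finset α) : Prop :=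
  a ∈ G.E ∪ M.Ebar ∧ 2 ≤ b.card ∧ (b = M.J a ∨ b = M.K a)

/-- The recursive sequence `R_e` of `e`: all sets obtained from `e` by iteratively
passing to non-singleton parts of the partitions (with `e ∈ R_e`). -/
def RMC.Rseq {α : Type*} [DecidableEq α] {G : MLHypergraph α} (M : RMC G) (e : Finset α) :
    Set (Finset α) :=
  {f | Relation.ReflTransGen M.step e f}

/-- The RMC is non-overlapping if the recursive sequences of distinct edges are disjoint. -/
def RMC.NonOverlapping {α : Type*} [DecidableEq α] {G : MLHypergraph α} (M : RMC G) : Prop :=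
  ∀ e ∈ G.E, ∀ e' ∈ G.E, e ≠ e' → M.Rseq e ∩ M.Rseq e' = ∅

/-- The point `w` (including artificial coordinates) satisfies all McCormick
inequalities of the RMC. -/
def RMC.McCormick {α : Type*} [DecidableEq α] {G : MLHypergraph α} (M : RMC G)
    (w : Finset α → ℝ) : Prop :=
  ∀ f ∈ G.E ∪ M.Ebar,
    0 ≤ w f ∧ w (M.J f) + w (M.K f) - 1 ≤ w f ∧ w f ≤ w (M.J f) ∧ w f ≤ w (M.K f)

/-- Membership in `MP^RMC_G`, the projection of the RMC polytope onto the coordinates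
indexed by `V ∪ E`: the point `z` admits an extension to the artificial variables
satisfying all McCormick inequalities of the RMC. -/
def RMC.MPRMC {α : Type*} [DecidableEq α] {G : MLHypergraph α} (M : RMC G)
    (z : Finset α → ℝ) : Prop :=
  ∃ w : Finset α → ℝ, (∀ v ∈ G.V, w {v} = z {v}) ∧ (∀ e ∈ G.E, w e = z e) ∧ M.McCormick w

/-- A flower partition `Te` of the edge `e`: a partition of `e` into pairwise disjoint
nonempty parts, each a singleton subset of `e` or an element of `R_e`, such that every
part lying in `Ebar` belongs to the recursive sequence of some other original edge. -/
def RMC.FlowerPartition {α : Type*} [DecidableEq α] {G : MLHypergraph α} (M : RMC G)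
    (e : Finset α) (Te : Finset (Finset α)) : Prop :=
  (∀ p ∈ Te, p.Nonempty) ∧
  (∀ p ∈ Te, ∀ q ∈ Te, p ≠ q → Disjoint p q) ∧
  Te.biUnion id = e ∧
  (∀ p ∈ Te, (p.card = 1 ∧ p ⊆ e) ∨ p ∈ M.Rseq e) ∧
  ∀ p ∈ Te, p ∈ M.Ebar → ∃ e' ∈ G.E, e' ≠ e ∧ p ∈ M.Rseq e'

/-- The McCormick system for the bilinear equation `w = u * v` over the unit hypercube. -/
def McSys (u v w : ℝ) : Prop := 0 ≤ w ∧ u + v - 1 ≤ w ∧ w ≤ u ∧ w ≤ v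

end Defs


/-- every point of the multilinear set satisfies every extended flower
inequality. -/
theorem multilinear_set_satisfies_extended_flower {α : Type*} [DecidableEq α]
    (G : MLHypergraph α) (z : Finset α → ℝ) (hz : MultilinearSet G z)
    (e₀ : Finset α) (he₀ : e₀ ∈ G.E)
    (T : Finset (Finset α)) (hT : T.Nonempty)
    (hTE : ∀ e ∈ T, e ∈ G.E ∧ e ≠ e₀)
    (hadj : ∀ e ∈ T, (e ∩ e₀).Nonempty)
    (hγ : ∀ i ∈ T, 2 ≤ ((e₀ ∩ i) \ (T.erase i).biUnion (fun j => e₀ ∩ j)).card) :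
    ExtFlowerIneq z e₀ T := by

  obtain ⟨hnode, hedge⟩ := hz
  have hn1 : ∀ v ∈ G.V, z {v} ≤ 1 := by
    intro v hv; rcases hnode v hv with h | h <;> simp [h]
  have hedge01 : ∀ e ∈ G.E, z e = 0 ∨ z e = 1 := by
    intro e he
    rw [hedge e he]
    by_cases h : ∃ v ∈ e, z {v} = 0
    · obtain ⟨v, hv, hv0⟩ := h
      exact Or.inl (Finset.prod_eq_zero hv hv0)
    · right
      apply Finset.prod_eq_one
      intro v hv
      rcases hnode v (G.edge_sub e he hv) with h0 | h1
      · exact absurd ⟨v, hv, h0⟩ h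
      · exact h1
  have hT1 : ∀ e ∈ T, z e ≤ 1 := by
    intro e he; rcases hedge01 e (hTE e he).1 with h | h <;> simp [h]
  set S : Finset α := e₀ \ T.biUnion id with hS
  have hS1 : ∀ v ∈ S, z {v} ≤ 1 := by
    intro v hv
    exact hn1 v (G.edge_sub e₀ he₀ (Finset.mem_sdiff.mp hv).1)
  have hsumT : (∑ e ∈ T, z e) ≤ (T.card : ℝ) := by
    calc (∑ e ∈ T, z e) ≤ ∑ e ∈ T, (1 : ℝ) := Finset.sum_le_sum hT1
    _ = (T.card : ℝ) := by simp
  have hsumS : (∑ v ∈ S, z {v}) ≤ (S.card : ℝ) := by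
    calc (∑ v ∈ S, z {v}) ≤ ∑ v ∈ S, (1 : ℝ) := Finset.sum_le_sum hS1
    _ = (S.card : ℝ) := by simp
  unfold ExtFlowerIneq
  rcases hedge01 e₀ he₀ with h0 | h1
  · -- z e₀ = 0 : find a zero node in e₀
    have := hedge e₀ he₀
    rw [h0] at this
    obtain ⟨v, hv, hv0⟩ := Finset.prod_eq_zero_iff.mp this.symm
    by_cases hvU : v ∈ T.biUnion id
    · obtain ⟨ek, hek, hvek⟩ := Finset.mem_biUnion.mp hvU
      have hek0 : z ek = 0 := by
        rw [hedge ek (hTE ek hek).1]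
        exact Finset.prod_eq_zero hvek hv0
      have hsum : (∑ e ∈ T, z e) = (∑ e ∈ T.erase ek, z e) + z ek :=
        (Finset.sum_erase_add T _ hek).symm
      have hsub : (∑ e ∈ T.erase ek, z e) ≤ ((T.erase ek).card : ℝ) := by
        calc (∑ e ∈ T.erase ek, z e) ≤ ∑ e ∈ T.erase ek, (1 : ℝ) :=
          Finset.sum_le_sum (fun e he => hT1 e (Finset.mem_of_mem_erase he))
        _ = _ := by simp
      have hcard : ((T.erase ek).card : ℝ) = (T.card : ℝ) - 1 := by
        rw [Finset.card_erase_of_mem hek]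
        have : 1 ≤ T.card := Finset.card_pos.mpr ⟨ek, hek⟩
        push_cast [this]
        ring
      rw [hsum, hek0, h0]
      rw [hcard] at hsub
      linarith
    · have hvS : v ∈ S := Finset.mem_sdiff.mpr ⟨hv, hvU⟩
      have hsum : (∑ w ∈ S, z {w}) = (∑ w ∈ S.erase v, z {w}) + z {v} :=
        (Finset.sum_erase_add S _ hvS).symm
      have hsub : (∑ w ∈ S.erase v, z {w}) ≤ ((S.erase v).card : ℝ) := by
        calc (∑ w ∈ S.erase v, z {w}) ≤ ∑ w ∈ S.erase v, (1 : ℝ) :=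
          Finset.sum_le_sum (fun w hw => hS1 w (Finset.mem_of_mem_erase hw))
        _ = _ := by simp
      have hcard : ((S.erase v).card : ℝ) = (S.card : ℝ) - 1 := by
        rw [Finset.card_erase_of_mem hvS]
        have : 1 ≤ S.card := Finset.card_pos.mpr ⟨v, hvS⟩
        push_cast [this]
        ring
      rw [hsum, hv0, h0]
      rw [hcard] at hsub
      linarith
  · rw [h1]
    have h1T : (1 : ℝ) ≤ T.card := by
      exact_mod_cast Finset.card_pos.mpr hT
    linarith
end

section
/- Let G=(V,E) be a hypergraph and consider a non-overlapping recursive McCormick relaxation of the multilinear set S_G. Then MP^LP_G ⊆ MP^RMC_G; that is, every point of the standard linearization admits an extension to the artificial variables satisfying all McCormick inequalities of the RMC. -/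
open Finset

section Aux

variable {α : Type*} [DecidableEq α]

/-- The natural "lower" linear function used to extend a point to artificial edges. -/
def ell (z : Finset α → ℝ) (S : Finset α) : ℝ := (∑ v ∈ S, z {v}) - (S.card : ℝ) + 1

lemma ell_singleton (z : Finset α → ℝ) (v : α) : ell z {v} = z {v} := by
  unfold ell
  rw [Finset.sum_singleton, Finset.card_singleton]
  push_cast
  ring

lemma ell_le_one {z : Finset α → ℝ} {S : Finset α} (h : ∀ v ∈ S, z {v} ≤ 1) :
    ell z S ≤ 1 := by
  have hs : ∑ v ∈ S, z {v} ≤ ∑ _v ∈ S, (1 : ℝ) := Finset.sum_le_sum h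
  rw [Finset.sum_const, nsmul_eq_mul, mul_one] at hs
  unfold ell
  linarith

lemma step_facts {G : MLHypergraph α} (M : RMC G) {a b : Finset α} (h : M.step a b) :
    b ⊆ a ∧ b ∈ G.E ∪ M.Ebar := by
  obtain ⟨ha, hb2, hJK⟩ := h
  have hu := M.union_eq a ha
  constructor
  · rcases hJK with rfl | rfl
    · intro x hx; rw [← hu]; exact Finset.mem_union_left _ hx
    · intro x hx; rw [← hu]; exact Finset.mem_union_right _ hx
  · rcases hJK with rfl | rfl
    · rcases M.J_mem a ha with h1 | h1
      · omega
      · exact h1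
    · rcases M.K_mem a ha with h1 | h1
      · omega
      · exact h1

lemma rseq_subset {G : MLHypergraph α} (M : RMC G) {e f : Finset α} (h : f ∈ M.Rseq e) :
    f ⊆ e := by
  have h' : Relation.ReflTransGen M.step e f := h
  clear h
  induction h' with
  | refl => exact subset_rfl
  | tail _ hstep ih => exact subset_trans (step_facts M hstep).1 ih

lemma rseq_eq_of_mem {G : MLHypergraph α} {M : RMC G} (hM : M.NonOverlapping)
    {e e' g : Finset α} (he : e ∈ G.E) (he' : e' ∈ G.E)
    (h1 : g ∈ M.Rseq e) (h2 : g ∈ M.Rseq e') : e = e' := by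
  by_contra hne
  have h := hM e he e' he' hne
  exact Set.eq_empty_iff_forall_notMem.mp h g ⟨h1, h2⟩

lemma ell_split {G : MLHypergraph α} (M : RMC G) (z : Finset α → ℝ) {f : Finset α}
    (hf : f ∈ G.E ∪ M.Ebar) :
    ell z f = ell z (M.J f) + ell z (M.K f) - 1 := by
  have hu := M.union_eq f hf
  have hd := M.disj f hf
  have hs : ∑ v ∈ f, z {v} = (∑ v ∈ M.J f, z {v}) + ∑ v ∈ M.K f, z {v} := by
    conv_lhs => rw [← hu]
    exact Finset.sum_union hd
  have hc : f.card = (M.J f).card + (M.K f).card := by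
    conv_lhs => rw [← hu]
    exact Finset.card_union_of_disjoint hd
  unfold ell
  rw [hs, hc]
  push_cast
  ring

lemma mc_arith {a b c : ℝ} (ha0 : 0 ≤ a) (ha : a ≤ 1) (hb : b ≤ 1) (hc : c ≤ 1) :
    0 ≤ max a (b + c - 1) ∧ max a b + max a c - 1 ≤ max a (b + c - 1) ∧
      max a (b + c - 1) ≤ max a b ∧ max a (b + c - 1) ≤ max a c := by
  refine ⟨le_trans ha0 (le_max_left _ _), ?_, ?_, ?_⟩
  · rcases le_total b a with h1 | h1
    · rcases le_total c a with h2 | h2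
      · rw [max_eq_left h1, max_eq_left h2]
        exact le_trans (by linarith) (le_max_left _ _)
      · rw [max_eq_left h1, max_eq_right h2]
        exact le_trans (by linarith) (le_max_left _ _)
    · rcases le_total c a with h2 | h2
      · rw [max_eq_right h1, max_eq_left h2]
        exact le_trans (by linarith) (le_max_left _ _)
      · rw [max_eq_right h1, max_eq_right h2]
        exact le_max_right _ _
  · exact max_le (le_max_left _ _) (le_trans (by linarith) (le_max_right _ _))
  · exact max_le (le_max_left _ _) (le_trans (by linarith) (le_max_right _ _))

end Aux


/-- for a non-overlapping recursive McCormick relaxation,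
`MP^LP_G ⊆ MP^RMC_G`. -/
theorem MPLP_subset_MPRMC_of_nonOverlapping {α : Type*} [DecidableEq α]
    (G : MLHypergraph α) (M : RMC G) (hM : M.NonOverlapping)
    (z : Finset α → ℝ) (hz : StdLin G z) :
    M.MPRMC z := by
  classical
  have hreach : ∀ f, f ∈ M.Ebar → ∃ e, e ∈ G.E ∧ f ∈ M.Rseq e := by
    intro f hf
    obtain ⟨e, he, hr⟩ := M.reach f hf
    exact ⟨e, he, hr⟩
  choose E0 hE0E hE0r using hreach
  set w : Finset α → ℝ :=
    fun S => if h : S ∈ M.Ebar then max (z (E0 S h)) (ell z S) else z S with hw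
  have hw_def : ∀ S, w S = if h : S ∈ M.Ebar then max (z (E0 S h)) (ell z S) else z S :=
    fun S => rfl
  have hsing : ∀ v : α, ({v} : Finset α) ∉ M.Ebar := by
    intro v hv
    have := M.ebar_card _ hv
    simp at this
  have hwE : ∀ e ∈ G.E, w e = z e := by
    intro e he
    rw [hw_def, dif_neg (fun h => M.ebar_new e h he)]
  refine ⟨w, fun v _ => by rw [hw_def, dif_neg (hsing v)], hwE, ?_⟩
  intro f hf
  obtain ⟨e, he, hfe⟩ : ∃ e, e ∈ G.E ∧ f ∈ M.Rseq e := by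
    rcases Finset.mem_union.mp hf with h | h
    · exact ⟨f, h, Relation.ReflTransGen.refl⟩
    · exact ⟨E0 f h, hE0E f h, hE0r f h⟩
  have hfs : f ⊆ e := rseq_subset M hfe
  have hesV : e ⊆ G.V := G.edge_sub e he
  have hze0 : 0 ≤ z e := (hz.2 e he).1
  have hzev : ∀ v ∈ e, z e ≤ z {v} := (hz.2 e he).2.2
  have hv1 : ∀ v ∈ e, z {v} ≤ 1 := fun v hv => hz.1 v (hesV hv)
  have hze1 : z e ≤ 1 := by
    obtain ⟨v, hv⟩ := Finset.card_pos.mp (lt_of_lt_of_le (by norm_num) (G.edge_card e he))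
    exact le_trans (hzev v hv) (hv1 v hv)
  have hu := M.union_eq f hf
  have hJs : M.J f ⊆ f := by intro x hx; rw [← hu]; exact Finset.mem_union_left _ hx
  have hKs : M.K f ⊆ f := by intro x hx; rw [← hu]; exact Finset.mem_union_right _ hx
  have hwf : ∀ g, g ∈ G.E ∪ M.Ebar → g ∈ M.Rseq e → w g = max (z e) (ell z g) := by
    intro g hg hge
    rcases Finset.mem_union.mp hg with h | h
    · have heg : e = g := rseq_eq_of_mem hM he h hge Relation.ReflTransGen.refl
      subst heg
      have hle : ell z e ≤ z e := (hz.2 e h).2.1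
      rw [hw_def, dif_neg (fun h' => M.ebar_new e h' h)]
      exact (max_eq_left hle).symm
    · have hEg : E0 g h = e := rseq_eq_of_mem hM (hE0E g h) he (hE0r g h) hge
      rw [hw_def, dif_pos h, hEg]
  have hwpart : ∀ g, (g = M.J f ∨ g = M.K f) → w g = max (z e) (ell z g) := by
    intro g hgJK
    have hgs : g ⊆ f := by rcases hgJK with rfl | rfl; exacts [hJs, hKs]
    have hmem : g.card = 1 ∨ g ∈ G.E ∪ M.Ebar := by
      rcases hgJK with rfl | rfl; exacts [M.J_mem f hf, M.K_mem f hf]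
    rcases hmem with h1 | hmem
    · obtain ⟨v, rfl⟩ := Finset.card_eq_one.mp h1
      have hvfe : v ∈ e := hfs (hgs (Finset.mem_singleton_self v))
      rw [hw_def, dif_neg (hsing v), ← ell_singleton z v,
        max_eq_right (by rw [ell_singleton]; exact hzev v hvfe)]
    · have h2 : 2 ≤ g.card := by
        rcases Finset.mem_union.mp hmem with h | h
        exacts [G.edge_card g h, M.ebar_card g h]
      have hge : g ∈ M.Rseq e :=
        Relation.ReflTransGen.tail hfe ⟨hf, h2, hgJK⟩
      exact hwf g hmem hge
  have hJw := hwpart (M.J f) (Or.inl rfl)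
  have hKw := hwpart (M.K f) (Or.inr rfl)
  have hfw := hwf f hf hfe
  have hsplit := ell_split M z hf
  have hbJ : ell z (M.J f) ≤ 1 := ell_le_one (fun v hv => hv1 v (hfs (hJs hv)))
  have hbK : ell z (M.K f) ≤ 1 := ell_le_one (fun v hv => hv1 v (hfs (hKs hv)))
  rw [hfw, hJw, hKw, hsplit]
  exact mc_arith hze0 hze1 hbJ hbK
end
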